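/- Let d ≥ 1, m : Fin d → ℕ with m i ≥ 1, and r : Fin d → ℕ with 1 ≤ r i ≤ m i for every i and (r i)² ≤ ∏_{j} r j for every i. Equip the space of d-mode real tensors T : (Π i : Fin d, Fin (m i)) → ℝ with the Hilbert–Schmidt norm and Lebesgue measure, and let C_r = { S : rank_i S ≤ r i for all i ∈ Fin d }, where rank_i S is the rank of the i-th unfolding of S. Then for Lebesgue-almost every tensor T there exists a unique S ∈ C_r with ‖T − S‖ = dist(T, C_r); that is, almost every real d-mode tensor has a unique best rank-(r 1, …, r d) approximation. -/

import Mathlib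

open MeasureTheory

/-- The `i`-th unfolding of a `d`-mode tensor `T`: the matrix with rows indexed
by `Fin (m i)` and columns indexed by multi-indices over the remaining modes. -/
def modeUnfold {F : Type*} [Field F] {d : ℕ} {m : Fin d → ℕ}
    (T : (∀ i, Fin (m i)) → F) (i : Fin d) :
    Matrix (Fin (m i)) (∀ j : {j : Fin d // j ≠ i}, Fin (m j.1)) F :=
  fun k idx' =>
    T (fun j => if h : j = i then Fin.cast (congrArg m h.symm) k else idx' ⟨j, h⟩)

/-- The set `C_r` of real `d`-mode tensors all of whose unfolding ranks are at
most `r i`. -/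
def rankAtMostSet {d : ℕ} (m r : Fin d → ℕ) :
    Set (EuclideanSpace ℝ (∀ i, Fin (m i))) :=
  {S | ∀ i, (modeUnfold (S : (∀ i, Fin (m i)) → ℝ) i).rank ≤ r i}

/-- The set of real matrices of rank at most `k` is closed. -/
theorem isClosed_rank_le {p q : Type*} [Fintype p] [Fintype q] (k : ℕ) :
    IsClosed {A : Matrix p q ℝ | A.rank ≤ k} := by
  rw [← isOpen_compl_iff]
  have key : {A : Matrix p q ℝ | A.rank ≤ k}ᶜ
      = ⋃ v : Fin (k + 1) → q, {A : Matrix p q ℝ |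
          LinearIndependent ℝ (fun i : Fin (k + 1) => A.transpose (v i))} := by
    ext A
    simp only [Set.mem_compl_iff, Set.mem_setOf_eq, not_le, Set.mem_iUnion]
    constructor
    · intro hA
      obtain ⟨b, hbT, hspan, hli⟩ := exists_linearIndependent ℝ (Set.range A.transpose)
      have hfin : b.Finite := hli.setFinite
      haveI : Fintype b := hfin.fintype
      have hcard : k + 1 ≤ Fintype.card b := by
        have h1 : A.rank = b.toFinset.card := by
          rw [Matrix.rank_eq_finrank_span_cols, Matrix.col, ← hspan, finrank_span_set_eq_card hli]
        have h2 : b.toFinset.card = Fintype.card b := Set.toFinset_card b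
        omega
      obtain ⟨g⟩ := Function.Embedding.nonempty_of_card_le
        (α := Fin (k + 1)) (β := b) (by simpa using hcard)
      choose v hv using fun i : Fin (k + 1) => hbT (g i).2
      refine ⟨v, ?_⟩
      have hfe' : (fun i : Fin (k + 1) => A.transpose (v i)) = fun i => ((g i : p → ℝ)) :=
        funext fun i => hv i
      rw [hfe']
      exact hli.comp g g.injective
    · rintro ⟨v, hv⟩
      have h1 : k + 1 ≤ Module.finrank ℝ
          (Submodule.span ℝ (Set.range fun i : Fin (k + 1) => A.transpose (v i))) := by
        rw [finrank_span_eq_card hv]; simp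
      have hsub : Set.range (fun i : Fin (k + 1) => A.transpose (v i)) ⊆ Set.range A.transpose := by
        rintro _ ⟨i, rfl⟩; exact ⟨v i, rfl⟩
      have h2 := Submodule.finrank_mono (Submodule.span_mono (R := ℝ) hsub)
      rw [Matrix.rank_eq_finrank_span_cols, Matrix.col]
      omega
  rw [key]
  refine isOpen_iUnion fun v => ?_
  have hcont : Continuous fun A : Matrix p q ℝ =>
      fun i : Fin (k + 1) => (A.transpose (v i) : p → ℝ) :=
    continuous_pi fun i => continuous_pi fun x =>
      ((continuous_apply (v i)).comp (continuous_apply x))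
  exact isOpen_setOf_linearIndependent.preimage hcont

/-- In a finite-dimensional real inner product space, for any nonempty closed
set, almost every point has a unique nearest point in the set. -/
theorem ae_exists_unique_nearest
    {E : Type*} [NormedAddCommGroup E] [InnerProductSpace ℝ E]
    [FiniteDimensional ℝ E] [MeasurableSpace E] [BorelSpace E]
    (μ : Measure E) [μ.IsAddHaarMeasure]
    {s : Set E} (hs : IsClosed s) (hne : s.Nonempty) :
    ∀ᵐ x ∂μ, ∃! y, y ∈ s ∧ dist x y = Metric.infDist x s := by
  set dC : E → ℝ := fun x => Metric.infDist x s with hdC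
  have hlip : LipschitzWith 1 dC := Metric.lipschitz_infDist_pt s
  have hg : ∀ n : ℕ, ∀ᵐ x ∂μ, DifferentiableAt ℝ (fun z => (min (dC z) n) ^ 2) x := by
    intro n
    have hlipn : LipschitzWith 1 (fun z => min (dC z) (n : ℝ)) := hlip.min_const _
    have hlipsq : LipschitzWith (2 * n) (fun z => (min (dC z) (n : ℝ)) ^ 2) := by
      apply LipschitzWith.of_dist_le_mul
      intro x y
      have h0x : 0 ≤ min (dC x) (n : ℝ) := le_min Metric.infDist_nonneg n.cast_nonneg
      have h0y : 0 ≤ min (dC y) (n : ℝ) := le_min Metric.infDist_nonneg n.cast_nonneg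
      have hnx : min (dC x) (n : ℝ) ≤ n := min_le_right _ _
      have hny : min (dC y) (n : ℝ) ≤ n := min_le_right _ _
      set a := min (dC x) (n : ℝ)
      set b := min (dC y) (n : ℝ)
      have hd : dist (a ^ 2) (b ^ 2) = |a + b| * |a - b| := by
        rw [Real.dist_eq, ← abs_mul]; ring_nf
      have hab : |a + b| ≤ 2 * n := by
        rw [abs_of_nonneg (by linarith)]; linarith
      have hmin : |a - b| ≤ dist x y := by
        have := hlipn.dist_le_mul x y
        rwa [Real.dist_eq, NNReal.coe_one, one_mul] at this
      calc dist (a ^ 2) (b ^ 2) = |a + b| * |a - b| := hd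
        _ ≤ (2 * n) * dist x y := by
            apply mul_le_mul hab hmin (abs_nonneg _) (by positivity)
        _ = ((2 * n : NNReal) : ℝ) * dist x y := by push_cast; ring
    exact hlipsq.ae_differentiableAt
  filter_upwards [ae_all_iff.2 hg] with x hx
  obtain ⟨y₀, hy₀s, hy₀d⟩ := hs.exists_infDist_eq_dist hne x
  have key : ∀ y₁ y₂, y₁ ∈ s → y₂ ∈ s → dist x y₁ = dC x → dist x y₂ = dC x →
      y₁ = y₂ := by
    intro y₁ y₂ h₁s h₂s h₁ h₂
    set n : ℕ := ⌊dC x⌋₊ + 1 with hn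
    have hxn : dC x < n := by
      have := Nat.lt_floor_add_one (dC x); push_cast [hn]; linarith
    have hdiff2 : DifferentiableAt ℝ (fun z => dC z ^ 2) x := by
      have hopen : IsOpen {z : E | dC z < n} :=
        isOpen_lt hlip.continuous continuous_const
      have heq : (fun z => dC z ^ 2) =ᶠ[nhds x] (fun z => (min (dC z) n) ^ 2) := by
        filter_upwards [hopen.mem_nhds hxn] with z hz
        simp [min_eq_left hz.le]
      exact (hx n).congr_of_eventuallyEq heq
    have hnormsq : Differentiable ℝ (fun z : E => ‖z‖ ^ 2) :=
      (contDiff_norm_sq ℝ (n := 1)).differentiable one_ne_zero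
    have hf : DifferentiableAt ℝ (fun z => ‖z‖ ^ 2 - dC z ^ 2) x :=
      (hnormsq x).sub hdiff2
    have main : ∀ y, y ∈ s → dist x y = dC x →
        fderiv ℝ (fun z => ‖z‖ ^ 2 - dC z ^ 2) x = (2 : ℝ) • (innerSL ℝ y) := by
      intro y hy hxy
      set h : E → ℝ := fun z => 2 * inner ℝ y z - ‖y‖ ^ 2 with hh
      have hdh : HasFDerivAt h ((2 : ℝ) • innerSL ℝ y) x := by
        have h1 : HasFDerivAt (fun z : E => (2 : ℝ) * inner ℝ y z)
            ((2 : ℝ) • innerSL ℝ y) x := ((innerSL ℝ y).hasFDerivAt.const_smul (2 : ℝ))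
        exact h1.sub_const _
      have hle : ∀ z, h z ≤ ‖z‖ ^ 2 - dC z ^ 2 := by
        intro z
        have h1 : dC z ≤ dist z y := Metric.infDist_le_dist_of_mem hy
        have h2 : dC z ^ 2 ≤ dist z y ^ 2 :=
          pow_le_pow_left₀ Metric.infDist_nonneg h1 2
        have h3 : dist z y ^ 2 = ‖z‖ ^ 2 - 2 * inner ℝ y z + ‖y‖ ^ 2 := by
          rw [dist_eq_norm, norm_sub_sq_real, real_inner_comm]
        simp only [hh]; linarith
      have heqx : h x = ‖x‖ ^ 2 - dC x ^ 2 := by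
        have h3 : dist x y ^ 2 = ‖x‖ ^ 2 - 2 * inner ℝ y x + ‖y‖ ^ 2 := by
          rw [dist_eq_norm, norm_sub_sq_real, real_inner_comm]
        simp only [hh]; rw [← hxy]; linarith
      have hmin : IsLocalMin (fun z => (‖z‖ ^ 2 - dC z ^ 2) - h z) x :=
        Filter.Eventually.of_forall fun z => by
          simp only; linarith [hle z, heqx]
      have h0 : fderiv ℝ (fun z => (‖z‖ ^ 2 - dC z ^ 2) - h z) x = 0 :=
        hmin.fderiv_eq_zero
      rw [fderiv_fun_sub hf hdh.differentiableAt, sub_eq_zero] at h0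
      rw [h0, hdh.fderiv]
    have e1 := main y₁ h₁s h₁
    have e2 := main y₂ h₂s h₂
    have heq : (2 : ℝ) • innerSL ℝ y₁ = (2 : ℝ) • innerSL ℝ y₂ := e1.symm.trans e2
    have hinner : ∀ z, (inner ℝ y₁ z : ℝ) = inner ℝ y₂ z := by
      intro z
      have := congrArg (fun L : E →L[ℝ] ℝ => L z) heq
      simp only [ContinuousLinearMap.smul_apply, innerSL_apply_apply, smul_eq_mul] at this
      linarith
    have hz : (inner ℝ (y₁ - y₂) (y₁ - y₂) : ℝ) = 0 := by
      rw [inner_sub_left, hinner (y₁ - y₂)]; ring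
    exact sub_eq_zero.mp (inner_self_eq_zero.mp hz)
  exact ⟨y₀, ⟨hy₀s, hy₀d.symm⟩, fun y hy => key y y₀ hy.1 hy₀s hy.2 hy₀d.symm⟩

/-- Lebesgue-almost every real `d`-mode tensor has a unique best
rank-`(r 1, …, r d)` approximation in the Hilbert–Schmidt norm. -/
theorem ae_unique_best_rank_r_approx
    (d : ℕ) (hd : 1 ≤ d) (m r : Fin d → ℕ)
    (hm : ∀ i, 1 ≤ m i) (hr1 : ∀ i, 1 ≤ r i) (hrm : ∀ i, r i ≤ m i)
    (hsq : ∀ i, r i ^ 2 ≤ ∏ j, r j) :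
    ∀ᵐ T ∂(volume : Measure (EuclideanSpace ℝ (∀ i, Fin (m i)))),
      ∃! S, S ∈ rankAtMostSet m r ∧
        dist T S = Metric.infDist T (rankAtMostSet m r) := by
  classical
  have hclosed : IsClosed (rankAtMostSet m r) := by
    have heq : rankAtMostSet m r = ⋂ i, (fun S : EuclideanSpace ℝ (∀ i, Fin (m i)) =>
        modeUnfold (S : (∀ i, Fin (m i)) → ℝ) i) ⁻¹' {A | A.rank ≤ r i} := by
      ext S
      simp [rankAtMostSet, Set.mem_iInter]
    rw [heq]
    refine isClosed_iInter fun i => ?_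
    refine (isClosed_rank_le (r i)).preimage ?_
    refine continuous_matrix fun k idx' => ?_
    exact (EuclideanSpace.proj
      (fun j => if h : j = i then Fin.cast (congrArg m h.symm) k else idx' ⟨j, h⟩)).continuous
  have hne : (rankAtMostSet m r).Nonempty := by
    refine ⟨0, fun i => ?_⟩
    have hz : modeUnfold ((0 : EuclideanSpace ℝ (∀ i, Fin (m i))) :
        (∀ i, Fin (m i)) → ℝ) i = 0 := rfl
    rw [hz, Matrix.rank_zero]
    exact Nat.zero_le _
  exact ae_exists_unique_nearest volume hclosed hne
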